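/- In an exact category, admissible monomorphisms are closed under composition. -/

import Mathlib

open CategoryTheory Limits

universe v u

/-- An exact structure (in the sense of Quillen/Keller) on an additive category: a class of
kernel-cokernel pairs ("exact sequences") closed under isomorphism, such that identities of
zero objects are admissible epimorphisms, admissible epimorphisms are closed under
composition, pullbacks of admissible epimorphisms along arbitrary morphisms exist and are
admissible epimorphisms, and pushouts of admissible monomorphisms along arbitrary morphisms
exist and are admissible monomorphisms. -/
structure ExactStructure (A : Type u) [Category.{v} A] [Preadditive A]
    [HasZeroObject A] [HasBinaryBiproducts A] where
  /-- `IsExact i p` means that `(i, p)` is one of the distinguished exact sequences. -/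
  IsExact : ∀ ⦃X Y Z : A⦄, (X ⟶ Y) → (Y ⟶ Z) → Prop
  comp_eq_zero : ∀ {X Y Z : A} {i : X ⟶ Y} {p : Y ⟶ Z}, IsExact i p → i ≫ p = 0
  is_kernel : ∀ {X Y Z : A} {i : X ⟶ Y} {p : Y ⟶ Z} (h : IsExact i p),
      Nonempty (IsLimit (KernelFork.ofι i (comp_eq_zero h)))
  is_cokernel : ∀ {X Y Z : A} {i : X ⟶ Y} {p : Y ⟶ Z} (h : IsExact i p),
      Nonempty (IsColimit (CokernelCofork.ofπ p (comp_eq_zero h)))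
  iso_closed : ∀ {X Y Z X' Y' Z' : A} {i : X ⟶ Y} {p : Y ⟶ Z}
      (eX : X ≅ X') (eY : Y ≅ Y') (eZ : Z ≅ Z') (i' : X' ⟶ Y') (p' : Y' ⟶ Z'),
      i ≫ eY.hom = eX.hom ≫ i' → p ≫ eZ.hom = eY.hom ≫ p' → IsExact i p → IsExact i' p'
  id_zero_epi : ∀ (Z : A), IsZero Z → ∃ (X : A) (i : X ⟶ Z), IsExact i (𝟙 Z)
  epi_comp : ∀ {X Y Z : A} (p : X ⟶ Y) (q : Y ⟶ Z),
      (∃ (W : A) (i : W ⟶ X), IsExact i p) → (∃ (W : A) (i : W ⟶ Y), IsExact i q) →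
      ∃ (W : A) (i : W ⟶ X), IsExact i (p ≫ q)
  pullback_epi : ∀ {B' C C' : A} (f : C ⟶ C') (p' : B' ⟶ C'),
      (∃ (W : A) (i : W ⟶ B'), IsExact i p') →
      ∃ (B : A) (g : B ⟶ B') (p : B ⟶ C),
        IsPullback g p p' f ∧ ∃ (W : A) (i : W ⟶ B), IsExact i p
  pushout_mono : ∀ {A₀ A' B : A} (g : A₀ ⟶ A') (i : A₀ ⟶ B),
      (∃ (Z : A) (p : B ⟶ Z), IsExact i p) →
      ∃ (B' : A) (i' : A' ⟶ B') (h : B ⟶ B'),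
        IsPushout g i i' h ∧ ∃ (Z : A) (p : B' ⟶ Z), IsExact i' p

variable {A : Type u} [Category.{v} A] [Preadditive A]
    [HasZeroObject A] [HasBinaryBiproducts A]

/-- A morphism is an admissible monomorphism if it appears as the first map of a
distinguished exact sequence. -/
def ExactStructure.AdmissibleMono (E : ExactStructure A) {X Y : A} (i : X ⟶ Y) : Prop :=
  ∃ (Z : A) (p : Y ⟶ Z), E.IsExact i p

/-- A morphism is an admissible epimorphism if it appears as the second map of a
distinguished exact sequence. -/
def ExactStructure.AdmissibleEpi (E : ExactStructure A) {Y Z : A} (p : Y ⟶ Z) : Prop :=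
  ∃ (X : A) (i : X ⟶ Y), E.IsExact i p


theorem ExactStructure.mono_of_isExact (E : ExactStructure A) {X Y Z : A} {i : X ⟶ Y}
    {p : Y ⟶ Z} (h : E.IsExact i p) : Mono i := by
  have hl := (E.is_kernel h).some
  constructor
  intro T u v huv
  exact Fork.IsLimit.hom_ext hl (by simpa using huv)

noncomputable def ExactStructure.kLift (E : ExactStructure A) {X Y Z T : A} {i : X ⟶ Y}
    {p : Y ⟶ Z} (h : E.IsExact i p) (k : T ⟶ Y) (hk : k ≫ p = 0) : T ⟶ X :=
  (KernelFork.IsLimit.lift' (E.is_kernel h).some k hk).1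

theorem ExactStructure.kLift_comp (E : ExactStructure A) {X Y Z T : A} {i : X ⟶ Y}
    {p : Y ⟶ Z} (h : E.IsExact i p) (k : T ⟶ Y) (hk : k ≫ p = 0) :
    E.kLift h k hk ≫ i = k := by
  have h2 := (KernelFork.IsLimit.lift' (E.is_kernel h).some k hk).2
  simpa [ExactStructure.kLift] using h2

noncomputable def ExactStructure.cDesc (E : ExactStructure A) {X Y Z T : A} {i : X ⟶ Y}
    {p : Y ⟶ Z} (h : E.IsExact i p) (k : Y ⟶ T) (hk : i ≫ k = 0) : Z ⟶ T :=
  (CokernelCofork.IsColimit.desc' (E.is_cokernel h).some k hk).1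

theorem ExactStructure.comp_cDesc (E : ExactStructure A) {X Y Z T : A} {i : X ⟶ Y}
    {p : Y ⟶ Z} (h : E.IsExact i p) (k : Y ⟶ T) (hk : i ≫ k = 0) :
    p ≫ E.cDesc h k hk = k := by
  have h2 := (CokernelCofork.IsColimit.desc' (E.is_cokernel h).some k hk).2
  simpa [ExactStructure.cDesc] using h2

/-- Transfer: if a map `p₀` fits in *some* pullback square over an admissible epi `p'`,
then `p₀` is the second map of an exact pair. -/
theorem ExactStructure.exists_isExact_of_isPullback (E : ExactStructure A)
    {B' C' C W : A} (p' : B' ⟶ C') (f : C ⟶ C') (g₀ : W ⟶ B') (p₀ : W ⟶ C)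
    (hpb : IsPullback g₀ p₀ p' f) (hadm : ∃ (X : A) (i : X ⟶ B'), E.IsExact i p') :
    ∃ (X : A) (i : X ⟶ W), E.IsExact i p₀ := by
  obtain ⟨B, g, pp, hpb2, X, i, hx⟩ := E.pullback_epi f p' hadm
  exact ⟨X, i ≫ (hpb2.isoIsPullback _ _ hpb).hom,
    E.iso_closed (Iso.refl X) (hpb2.isoIsPullback _ _ hpb) (Iso.refl C) _ p₀
      (by simp) (by simp) hx⟩

/-- Transfer: if a map `i₀` fits in *some* pushout square pushing an admissible mono `m`,
then `i₀` is the first map of an exact pair. -/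
theorem ExactStructure.exists_isExact_of_isPushout (E : ExactStructure A)
    {A₀ A' B W : A} (g : A₀ ⟶ A') (m : A₀ ⟶ B) (i₀ : A' ⟶ W) (h₀ : B ⟶ W)
    (hpo : IsPushout g m i₀ h₀) (hadm : ∃ (Z : A) (p : B ⟶ Z), E.IsExact m p) :
    ∃ (Z : A) (p : W ⟶ Z), E.IsExact i₀ p := by
  obtain ⟨B', i', h', hpo2, Z, p, hx⟩ := E.pushout_mono g m hadm
  exact ⟨Z, (hpo2.isoIsPushout _ _ hpo).inv ≫ p,
    E.iso_closed (Iso.refl A') (hpo2.isoIsPushout _ _ hpo) (Iso.refl Z) i₀ _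
      (by simp) (by simp) hx⟩

/-- Transfer: replacing the kernel in an exact pair. -/
theorem ExactStructure.isExact_of_isKernel (E : ExactStructure A) {M N Y Z : A} {m : M ⟶ Y}
    {P : Y ⟶ Z} (h : E.IsExact m P) {n : N ⟶ Y} (hn : n ≫ P = 0)
    (hlim : IsLimit (KernelFork.ofι n hn)) : E.IsExact n P := by
  let e := IsLimit.conePointUniqueUpToIso (E.is_kernel h).some hlim
  have h1 : e.hom ≫ n = m := by
    have := IsLimit.conePointUniqueUpToIso_hom_comp (E.is_kernel h).some hlim
      WalkingParallelPair.zero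
    simpa [e] using this
  exact E.iso_closed e (Iso.refl Y) (Iso.refl Z) n P (by simp [h1]) (by simp) h

/-- In an exact category, admissible monomorphisms are closed under composition. -/
theorem ExactStructure.admissibleMono_comp (E : ExactStructure A)
    {X Y Z : A} (i : X ⟶ Y) (j : Y ⟶ Z)
    (hi : E.AdmissibleMono i) (hj : E.AdmissibleMono j) :
    E.AdmissibleMono (i ≫ j) := by
  obtain ⟨P, p, hip⟩ := hi
  obtain ⟨Q, q, hjq⟩ := hj
  have mono_i : Mono i := E.mono_of_isExact hip
  have mono_j : Mono j := E.mono_of_isExact hjq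
  -- push out `j` along `p`
  obtain ⟨D, i₁, hD, hPO, R, r, hi₁r⟩ := E.pushout_mono p j ⟨Q, q, hjq⟩
  have mono_i₁ : Mono i₁ := E.mono_of_isExact hi₁r
  have hw : p ≫ i₁ = j ≫ hD := hPO.w
  have hz : p ≫ (0 : P ⟶ Q) = j ≫ q := by rw [comp_zero, E.comp_eq_zero hjq]
  -- the induced map `D ⟶ Q`
  let f' : D ⟶ Q := hPO.desc 0 q hz
  have hif' : i₁ ≫ f' = 0 := hPO.inl_desc 0 q hz
  have hhf' : hD ≫ f' = q := hPO.inr_desc 0 q hz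
  have hjhr : j ≫ hD ≫ r = 0 := by
    rw [← Category.assoc, ← hw, Category.assoc, E.comp_eq_zero hi₁r, comp_zero]
  let ρ₀ : Q ⟶ R := E.cDesc hjq (hD ≫ r) hjhr
  have hqρ : q ≫ ρ₀ = hD ≫ r := E.comp_cDesc hjq (hD ≫ r) hjhr
  have hrρ : r = f' ≫ ρ₀ := by
    apply hPO.hom_ext
    · rw [E.comp_eq_zero hi₁r, ← Category.assoc, hif', zero_comp]
    · rw [← Category.assoc, hhf', hqρ]
  -- the map `γ : P ⊞ Z ⟶ D` is an admissible epi, being a pullback of `q` along `f'`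
  let γ : P ⊞ Z ⟶ D := biprod.fst ≫ i₁ + biprod.snd ≫ hD
  have sq1 : (biprod.snd : P ⊞ Z ⟶ Z) ≫ q = γ ≫ f' := by
    simp [γ, Preadditive.add_comp, hif', hhf']
  have hPB1 : IsPullback (biprod.snd : P ⊞ Z ⟶ Z) γ q f' := by
    have key : ∀ s : PullbackCone q f', (s.snd - s.fst ≫ hD) ≫ r = 0 := by
      intro s
      have h1 : s.snd ≫ r = (s.fst ≫ q) ≫ ρ₀ := by
        rw [hrρ, ← Category.assoc, ← s.condition]
      have h2 : (s.fst ≫ hD) ≫ r = (s.fst ≫ q) ≫ ρ₀ := by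
        rw [Category.assoc, ← hqρ, ← Category.assoc]
      rw [Preadditive.sub_comp, h1, h2, sub_self]
    refine IsPullback.of_isLimit (PullbackCone.IsLimit.mk sq1
      (fun s => biprod.lift (E.kLift hi₁r (s.snd - s.fst ≫ hD) (key s)) s.fst)
      (fun s => by simp) (fun s => ?_) (fun s m hm1 hm2 => ?_))
    · -- lift ≫ γ = s.snd
      simp only [γ, Preadditive.comp_add, ← Category.assoc, biprod.lift_fst, biprod.lift_snd]
      rw [E.kLift_comp, sub_add_cancel]
    · apply biprod.hom_ext
      · rw [← cancel_mono i₁, biprod.lift_fst, E.kLift_comp]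
        have h3 : m ≫ γ = m ≫ biprod.fst ≫ i₁ + m ≫ biprod.snd ≫ hD := by
          simp [γ, Preadditive.comp_add]
        rw [hm2] at h3
        rw [h3, ← hm1]
        simp only [Category.assoc]
        abel
      · simp [hm1]
  -- the map `δ₁ = p ⊕ 1 : Y ⊞ Z ⟶ P ⊞ Z` is an admissible epi, being a pullback of `p`
  let δ₁ : Y ⊞ Z ⟶ P ⊞ Z := biprod.lift (biprod.fst ≫ p) biprod.snd
  have sq2 : (biprod.fst : Y ⊞ Z ⟶ Y) ≫ p = δ₁ ≫ biprod.fst := by simp [δ₁]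
  have hPB3 : IsPullback (biprod.fst : Y ⊞ Z ⟶ Y) δ₁ p (biprod.fst : P ⊞ Z ⟶ P) := by
    refine IsPullback.of_isLimit (PullbackCone.IsLimit.mk sq2
      (fun s => biprod.lift s.fst (s.snd ≫ biprod.snd))
      (fun s => by simp) (fun s => ?_) (fun s m hm1 hm2 => ?_))
    · apply biprod.hom_ext
      · simpa [δ₁] using s.condition
      · simp [δ₁]
    · apply biprod.hom_ext
      · simpa using hm1
      · have h3 : m ≫ δ₁ ≫ biprod.snd = s.snd ≫ biprod.snd := by
          rw [← Category.assoc, hm2]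
        simpa [δ₁] using h3
  obtain ⟨Mγ, mγ, hγx⟩ := E.exists_isExact_of_isPullback q f' _ _ hPB1 ⟨Y, j, hjq⟩
  obtain ⟨Mδ, mδ, hδx⟩ := E.exists_isExact_of_isPullback p biprod.fst _ _ hPB3 ⟨X, i, hip⟩
  -- hence `Φ = δ₁ ≫ γ` is an admissible epi
  obtain ⟨M₂, m₂, hΦ⟩ := E.epi_comp δ₁ γ ⟨Mδ, mδ, hδx⟩ ⟨Mγ, mγ, hγx⟩
  -- the map `μ : X ⊞ Y ⟶ Y ⊞ Z` is a kernel of `Φ`, hence an admissible mono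
  let μ : X ⊞ Y ⟶ Y ⊞ Z := biprod.lift (biprod.fst ≫ i + biprod.snd) (-(biprod.snd ≫ j))
  have hμδ : μ ≫ δ₁ = biprod.lift (biprod.snd ≫ p) (-(biprod.snd ≫ j)) := by
    apply biprod.hom_ext
    · simp [μ, δ₁, Preadditive.add_comp, E.comp_eq_zero hip]
    · simp [μ, δ₁]
  have hμΦ : μ ≫ δ₁ ≫ γ = 0 := by
    rw [← Category.assoc, hμδ]
    simp only [γ, Preadditive.comp_add, biprod.lift_fst_assoc, biprod.lift_snd_assoc,
      Preadditive.neg_comp, Category.assoc, hw]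
    abel
  have keyA : ∀ {T : A} (k : T ⟶ Y ⊞ Z), k ≫ δ₁ ≫ γ = 0 →
      (k ≫ biprod.fst) ≫ p ≫ i₁ + (k ≫ biprod.snd) ≫ hD = 0 := by
    intro T k hk
    have h1 : k ≫ δ₁ ≫ γ = (k ≫ biprod.fst) ≫ p ≫ i₁ + (k ≫ biprod.snd) ≫ hD := by
      simp [δ₁, γ, Preadditive.comp_add, ← Category.assoc]
    rw [← h1, hk]
  have keyB : ∀ {T : A} (k : T ⟶ Y ⊞ Z), k ≫ δ₁ ≫ γ = 0 → (k ≫ biprod.snd) ≫ q = 0 := by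
    intro T k hk
    have h1 := keyA k hk
    have h2 : (k ≫ biprod.snd) ≫ hD = -((k ≫ biprod.fst) ≫ p ≫ i₁) :=
      eq_neg_of_add_eq_zero_right h1
    rw [← hhf', ← Category.assoc, h2]
    simp only [Preadditive.neg_comp, Category.assoc, hif', comp_zero, neg_zero]
  have keyC : ∀ {T : A} (k : T ⟶ Y ⊞ Z) (hk : k ≫ δ₁ ≫ γ = 0),
      (k ≫ biprod.fst + E.kLift hjq (k ≫ biprod.snd) (keyB k hk)) ≫ p = 0 := by
    intro T k hk
    have hω : E.kLift hjq (k ≫ biprod.snd) (keyB k hk) ≫ p ≫ i₁ = (k ≫ biprod.snd) ≫ hD := by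
      rw [hw, ← Category.assoc, E.kLift_comp]
    rw [← cancel_mono i₁, zero_comp, Category.assoc, Preadditive.add_comp, hω]
    exact keyA k hk
  have hμlim : IsLimit (KernelFork.ofι μ hμΦ) := by
    refine KernelFork.IsLimit.ofι μ hμΦ
      (fun {T} k hk => biprod.lift (E.kLift hip _ (keyC k hk))
        (-(E.kLift hjq (k ≫ biprod.snd) (keyB k hk)))) ?_ ?_
    · intro T k hk
      apply biprod.hom_ext
      · have h1 : μ ≫ biprod.fst = biprod.fst ≫ i + biprod.snd := by simp [μ]
        rw [Category.assoc, h1, Preadditive.comp_add, ← Category.assoc, biprod.lift_fst,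
          E.kLift_comp hip _ (keyC k hk), biprod.lift_snd]
        abel
      · have h2 : μ ≫ biprod.snd = -(biprod.snd ≫ j) := by simp [μ]
        rw [Category.assoc, h2, Preadditive.comp_neg, ← Category.assoc, biprod.lift_snd,
          Preadditive.neg_comp, E.kLift_comp hjq _ (keyB k hk), neg_neg]
    · intro T k hk m hm
      have hsnd : m ≫ biprod.snd = -(E.kLift hjq (k ≫ biprod.snd) (keyB k hk)) := by
        rw [← cancel_mono j]
        have h0 : m ≫ μ ≫ biprod.snd = k ≫ biprod.snd := by rw [← Category.assoc, hm]
        have h1 : μ ≫ biprod.snd = -(biprod.snd ≫ j) := by simp [μ]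
        rw [h1] at h0
        simp only [Preadditive.comp_neg, ← Category.assoc] at h0
        rw [Preadditive.neg_comp, E.kLift_comp, ← h0, neg_neg]
      apply biprod.hom_ext
      · rw [← cancel_mono i, biprod.lift_fst, E.kLift_comp]
        have h0 : m ≫ μ ≫ biprod.fst = k ≫ biprod.fst := by rw [← Category.assoc, hm]
        have h1 : μ ≫ biprod.fst = biprod.fst ≫ i + biprod.snd := by simp [μ]
        rw [h1, Preadditive.comp_add] at h0
        rw [← h0, hsnd]
        simp only [Category.assoc]
        abel
      · rw [biprod.lift_snd, hsnd]
  have hexμ : E.IsExact μ (δ₁ ≫ γ) := E.isExact_of_isKernel hΦ hμΦ hμlim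
  -- finally, `i ≫ j` is the pushout of `μ` along `biprod.fst`
  let ρ : Y ⊞ Z ⟶ Z := biprod.fst ≫ j + biprod.snd
  have sqPO : (biprod.fst : X ⊞ Y ⟶ X) ≫ (i ≫ j) = μ ≫ ρ := by
    simp [μ, ρ, Preadditive.comp_add, ← Category.assoc, Preadditive.neg_comp]
  have hPO2 : IsPushout (biprod.fst : X ⊞ Y ⟶ X) μ (i ≫ j) ρ := by
    have keyD : ∀ s : PushoutCocone (biprod.fst : X ⊞ Y ⟶ X) μ,
        biprod.inl ≫ s.inr = j ≫ biprod.inr ≫ s.inr := by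
      intro s
      have h0 : biprod.inr ≫ μ ≫ s.inr = 0 := by
        rw [← s.condition]
        simp
      have h1 : (biprod.inr : Y ⟶ X ⊞ Y) ≫ μ = biprod.inl - j ≫ biprod.inr := by
        apply biprod.hom_ext <;> simp [μ]
      rw [← Category.assoc, h1, Preadditive.sub_comp, sub_eq_zero, Category.assoc] at h0
      exact h0
    have keyE : ∀ s : PushoutCocone (biprod.fst : X ⊞ Y ⟶ X) μ,
        s.inl = i ≫ biprod.inl ≫ s.inr := by
      intro s
      have h0 : (biprod.inl : X ⟶ X ⊞ Y) ≫ μ ≫ s.inr =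
          (biprod.inl : X ⟶ X ⊞ Y) ≫ biprod.fst ≫ s.inl := by
        rw [← s.condition]
      have h1 : (biprod.inl : X ⟶ X ⊞ Y) ≫ μ = i ≫ biprod.inl := by
        apply biprod.hom_ext <;> simp [μ]
      rw [← Category.assoc, h1] at h0
      simpa using h0.symm
    refine IsPushout.of_isColimit (PushoutCocone.IsColimit.mk sqPO
      (fun s => biprod.inr ≫ s.inr) (fun s => ?_) (fun s => ?_) (fun s m hm1 hm2 => ?_))
    · -- (i ≫ j) ≫ desc = s.inl
      show (i ≫ j) ≫ biprod.inr ≫ s.inr = s.inl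
      rw [keyE s, keyD s]
      simp only [Category.assoc]
    · -- ρ ≫ desc = s.inr
      show ρ ≫ biprod.inr ≫ s.inr = s.inr
      have h2 : (biprod.inl : Y ⟶ Y ⊞ Z) ≫ ρ = j := by simp [ρ]
      have h3 : (biprod.inr : Z ⟶ Y ⊞ Z) ≫ ρ = 𝟙 Z := by simp [ρ]
      apply biprod.hom_ext'
      · rw [← Category.assoc, h2]
        exact (keyD s).symm
      · rw [← Category.assoc, h3, Category.id_comp]
    · show m = biprod.inr ≫ s.inr
      have h3 : (biprod.inr : Z ⟶ Y ⊞ Z) ≫ ρ = 𝟙 Z := by simp [ρ]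
      rw [← hm2, ← Category.assoc, h3, Category.id_comp]
  exact E.exists_isExact_of_isPushout biprod.fst μ (i ≫ j) ρ hPO2 ⟨D, δ₁ ≫ γ, hexμ⟩
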